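/- Let h : G ↷ H be an actor between étale groupoids and let U ⊆ G, V ⊆ H be open bisections. Then the action multiplication restricts to a homeomorphism from the fibred product U ×_{s,ρ} V onto U·V. -/
import Mathlib


open Topology

/-- A topological groupoid: a set with a partially defined multiplication
(`D a b` expresses composability), an inversion, satisfying the groupoid
axioms, such that inversion is continuous and multiplication is continuous
on the set of composable pairs. -/
structure TopGroupoid (G : Type*) [TopologicalSpace G] where
  /-- composability -/
  D : G → G → Prop
  /-- partially defined multiplication (junk values off `D`) -/
  comp : G → G → G
  /-- inversion -/
  inv : G → G
  inv_inv : ∀ g, inv (inv g) = g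
  d_inv : ∀ g, D g (inv g)
  d_eq : ∀ a b, D a b ↔ comp (inv a) a = comp b (inv b)
  d_comp_left : ∀ {a b c}, D a b → D b c → D (comp a b) c
  d_comp_right : ∀ {a b c}, D a b → D b c → D a (comp b c)
  assoc : ∀ {a b c}, D a b → D b c → comp (comp a b) c = comp a (comp b c)
  cancel_left : ∀ {g h}, D g h → comp (inv g) (comp g h) = h
  cancel_right : ∀ {g h}, D g h → comp (comp g h) (inv h) = g
  continuous_inv : Continuous inv
  continuousOn_comp : ContinuousOn (fun p : G × G => comp p.1 p.2) {p | D p.1 p.2}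

namespace TopGroupoid

variable {G : Type*} [TopologicalSpace G]

/-- The source map `s(γ) = γ⁻¹γ`. -/
def src (S : TopGroupoid G) (g : G) : G := S.comp (S.inv g) g

/-- The range map `r(γ) = γγ⁻¹`. -/
def rng (S : TopGroupoid G) (g : G) : G := S.comp g (S.inv g)

/-- The unit space `G⁽⁰⁾ = {γ⁻¹γ : γ ∈ G}`. -/
def unitSpace (S : TopGroupoid G) : Set G := Set.range S.src

/-- A groupoid is étale if its range map is a local homeomorphism. -/
def IsEtale (S : TopGroupoid G) : Prop := IsLocalHomeomorph S.rng

/-- An open bisection: an open set on which both the source and the range map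
are injective (hence, in an étale groupoid, restrict to homeomorphisms onto
their open images). -/
def IsOpenBisection (S : TopGroupoid G) (U : Set G) : Prop :=
  IsOpen U ∧ Set.InjOn S.src U ∧ Set.InjOn S.rng U

/-- Pointwise product of subsets: `U·V = {γη : γ ∈ U, η ∈ V, s γ = r η}`. -/
def setMul (S : TopGroupoid G) (U V : Set G) : Set G :=
  {g | ∃ a ∈ U, ∃ b ∈ V, S.D a b ∧ g = S.comp a b}

/-- Pointwise inverse of a subset: `U⁻¹ = {γ⁻¹ : γ ∈ U}`. -/
def setInv (S : TopGroupoid G) (U : Set G) : Set G := S.inv '' U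

end TopGroupoid

/-- An actor `G ↷ H`: a continuous left action of `G` on `H` (with anchor map
`ρ : H → G⁽⁰⁾`) which commutes with the right multiplication of `H` on itself. -/
structure Actor {G : Type*} {H : Type*} [TopologicalSpace G] [TopologicalSpace H]
    (S : TopGroupoid G) (T : TopGroupoid H) where
  /-- the anchor map -/
  rho : H → G
  /-- the action multiplication, partially defined (junk off `s γ = ρ x`) -/
  act : G → H → H
  rho_mem : ∀ x, rho x ∈ S.unitSpace
  continuous_rho : Continuous rho
  continuousOn_act :
    ContinuousOn (fun p : G × H => act p.1 p.2) {p | S.src p.1 = rho p.2}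
  rho_act : ∀ {γ x}, S.src γ = rho x → rho (act γ x) = S.rng γ
  act_assoc : ∀ {γ₁ γ₂ x}, S.D γ₁ γ₂ → S.src γ₂ = rho x →
      act γ₁ (act γ₂ x) = act (S.comp γ₁ γ₂) x
  act_unit : ∀ x, act (rho x) x = x
  rho_comp : ∀ {x y}, T.D x y → rho (T.comp x y) = rho x
  src_act : ∀ {γ x}, S.src γ = rho x → T.src (act γ x) = T.src x
  act_right : ∀ {γ x y}, S.src γ = rho x → T.D x y →
      act γ (T.comp x y) = T.comp (act γ x) y

namespace Actor

variable {G H : Type*} [TopologicalSpace G] [TopologicalSpace H]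
variable {S : TopGroupoid G} {T : TopGroupoid H}

/-- An actor is free if the only arrows fixing a unit are units. -/
def Free (A : Actor S T) : Prop :=
  ∀ t ∈ T.unitSpace, ∀ γ : G, S.src γ = A.rho t → A.act γ t = t → γ ∈ S.unitSpace

/-- An actor is proper if the anchor map restricted to the unit space of `H`
is a proper map. -/
def Proper (A : Actor S T) : Prop := IsProperMap (T.unitSpace.restrict A.rho)

/-- `U·V = {γ·x : γ ∈ U, x ∈ V, s γ = ρ x}`. -/
def actSet (A : Actor S T) (U : Set G) (V : Set H) : Set H :=
  {y | ∃ γ ∈ U, ∃ x ∈ V, S.src γ = A.rho x ∧ y = A.act γ x}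

end Actor

section Aux

open Topology Set

variable {G H : Type*} [TopologicalSpace G] [TopologicalSpace H]
variable {S : TopGroupoid G} {T : TopGroupoid H}

lemma TopGroupoid.src_inv (S : TopGroupoid G) (g : G) : S.src (S.inv g) = S.rng g := by
  unfold TopGroupoid.src TopGroupoid.rng
  rw [S.inv_inv]

lemma TopGroupoid.rng_inv (S : TopGroupoid G) (g : G) : S.rng (S.inv g) = S.src g := by
  unfold TopGroupoid.src TopGroupoid.rng
  rw [S.inv_inv]

lemma TopGroupoid.d_inv_self (S : TopGroupoid G) (g : G) : S.D (S.inv g) g := by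
  have := S.d_inv (S.inv g)
  rwa [S.inv_inv] at this

lemma Actor.act_cancel (A : Actor S T) {gam : G} {y : H} (h : S.rng gam = A.rho y) :
    A.act gam (A.act (S.inv gam) y) = y := by
  rw [A.act_assoc (S.d_inv gam) (by rw [S.src_inv]; exact h)]
  show A.act (S.rng gam) y = y
  rw [h, A.act_unit]

lemma Actor.act_cancel' (A : Actor S T) {gam : G} {x : H} (h : S.src gam = A.rho x) :
    A.act (S.inv gam) (A.act gam x) = x := by
  rw [A.act_assoc (S.d_inv_self gam) h]
  show A.act (S.src gam) x = x
  rw [h, A.act_unit]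

lemma Actor.actSet_isOpen (hS : S.IsEtale) (A : Actor S T) {U : Set G} {V : Set H}
    (hUo : IsOpen U) (hVo : IsOpen V) : IsOpen (A.actSet U V) := by
  rw [isOpen_iff_forall_mem_open]
  rintro y0 ⟨g0, hg0U, x0, hx0V, hsr, rfl⟩
  obtain ⟨φ, hg0src, hφ⟩ := hS g0
  set M : Set G := φ '' (φ.source ∩ U) with hM
  have hMopen : IsOpen M :=
    φ.isOpen_image_of_subset_source (φ.open_source.inter hUo) inter_subset_left
  have hMt : M ⊆ φ.target := by
    rintro z ⟨g, hg, rfl⟩; exact φ.map_source hg.1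
  have key : ∀ z ∈ M, φ.symm z ∈ φ.source ∩ U ∧ S.rng (φ.symm z) = z := by
    rintro z ⟨g, hg, rfl⟩
    rw [φ.left_inv hg.1]
    exact ⟨hg, (congrFun hφ g)⟩
  set P : Set H := A.rho ⁻¹' M with hP
  have hPopen : IsOpen P := hMopen.preimage A.continuous_rho
  set c : H → H := fun y => A.act (S.inv (φ.symm (A.rho y))) y with hc
  have hsrc_eq : ∀ y ∈ P, S.src (S.inv (φ.symm (A.rho y))) = A.rho y := fun y hy => by
    rw [S.src_inv]; exact (key _ hy).2
  have hcont : ContinuousOn c P := by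
    have h1 : ContinuousOn (fun y : H => (S.inv (φ.symm (A.rho y)), y)) P := by
      refine ContinuousOn.prodMk ?_ continuousOn_id
      exact S.continuous_inv.comp_continuousOn
        (φ.continuousOn_symm.comp A.continuous_rho.continuousOn fun y hy => hMt hy)
    exact A.continuousOn_act.comp h1 fun y hy => hsrc_eq y hy
  have hry0 : A.rho (A.act g0 x0) = S.rng g0 := A.rho_act hsr
  have hg0M : A.rho (A.act g0 x0) ∈ M := by
    rw [hry0]
    exact ⟨g0, ⟨hg0src, hg0U⟩, (congrFun hφ g0).symm⟩
  have hsymm0 : φ.symm (A.rho (A.act g0 x0)) = g0 := by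
    rw [hry0, congrFun hφ g0, φ.left_inv hg0src]
  refine ⟨P ∩ c ⁻¹' V, ?_, hcont.isOpen_inter_preimage hPopen hVo, hg0M, ?_⟩
  · rintro y ⟨hyP, hyV⟩
    refine ⟨φ.symm (A.rho y), (key _ hyP).1.2, c y, hyV, ?_, ?_⟩
    · rw [show A.rho (c y) = S.rng (S.inv (φ.symm (A.rho y))) from A.rho_act (hsrc_eq y hyP),
        S.rng_inv]
    · exact (A.act_cancel (key _ hyP).2).symm
  · show c (A.act g0 x0) ∈ V
    rw [hc]
    simp only [hsymm0]
    rw [A.act_cancel' hsr]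
    exact hx0V

end Aux

/-- For an actor `h : G ↷ H` between étale groupoids and open bisections
`U ⊆ G`, `V ⊆ H`, the action multiplication restricts to a homeomorphism from
the fibred product `U ×_{s,ρ} V` onto `U·V`: it is an open embedding with range
exactly `U·V`. -/
theorem actor_mul_restrict_homeo {G H : Type*} [TopologicalSpace G] [TopologicalSpace H]
    {S : TopGroupoid G} {T : TopGroupoid H} (hS : S.IsEtale) (hT : T.IsEtale)
    (A : Actor S T) (U : Set G) (V : Set H)
    (hU : S.IsOpenBisection U) (hV : T.IsOpenBisection V) :
    Topology.IsOpenEmbedding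
      (fun p : {p : G × H // p.1 ∈ U ∧ p.2 ∈ V ∧ S.src p.1 = A.rho p.2} =>
        A.act p.1.1 p.1.2) ∧
    Set.range
      (fun p : {p : G × H // p.1 ∈ U ∧ p.2 ∈ V ∧ S.src p.1 = A.rho p.2} =>
        A.act p.1.1 p.1.2) = A.actSet U V := by
  classical
  set f : {p : G × H // p.1 ∈ U ∧ p.2 ∈ V ∧ S.src p.1 = A.rho p.2} → H :=
    fun p => A.act p.1.1 p.1.2 with hf
  have hrange : Set.range f = A.actSet U V := by
    ext y
    constructor
    · rintro ⟨⟨⟨g, x⟩, hgU, hxV, hsr⟩, rfl⟩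
      exact ⟨g, hgU, x, hxV, hsr, rfl⟩
    · rintro ⟨g, hgU, x, hxV, hsr, rfl⟩
      exact ⟨⟨⟨g, x⟩, hgU, hxV, hsr⟩, rfl⟩
  have hcont : Continuous f :=
    A.continuousOn_act.comp_continuous continuous_subtype_val fun p => p.2.2.2
  have hinj : Function.Injective f := by
    rintro ⟨⟨g, x⟩, hgU, hxV, hsr⟩ ⟨⟨g', x'⟩, hgU', hxV', hsr'⟩ heq
    simp only [hf] at heq
    have hx : x = x' := by
      apply hV.2.1 hxV hxV'
      rw [← A.src_act hsr, ← A.src_act hsr', heq]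
    have hg : g = g' := by
      apply hU.2.2 hgU hgU'
      rw [← A.rho_act hsr, ← A.rho_act hsr', heq]
    simp [hx, hg]
  have hopen : IsOpenMap f := by
    intro O hO
    rw [isOpen_iff_forall_mem_open]
    rintro y ⟨⟨⟨g, x⟩, hgU, hxV, hsr⟩, hpO, rfl⟩
    rw [isOpen_induced_iff] at hO
    obtain ⟨Q, hQopen, rfl⟩ := hO
    have hgxQ : (g, x) ∈ Q := hpO
    rw [isOpen_prod_iff] at hQopen
    obtain ⟨P1, P2, hP1, hP2, hgP1, hxP2, hPQ⟩ := hQopen g x hgxQ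
    refine ⟨A.actSet (U ∩ P1) (V ∩ P2),
      ?_, A.actSet_isOpen hS (hU.1.inter hP1) (hV.1.inter hP2),
      ⟨g, ⟨hgU, hgP1⟩, x, ⟨hxV, hxP2⟩, hsr, rfl⟩⟩
    rintro z ⟨g', hg', x', hx', hsr', rfl⟩
    exact ⟨⟨⟨g', x'⟩, hg'.1, hx'.1, hsr'⟩, hPQ (Set.mk_mem_prod hg'.2 hx'.2), rfl⟩
  exact ⟨Topology.IsOpenEmbedding.of_continuous_injective_isOpenMap hcont hinj hopen, hrange⟩
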